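/- Let (R,w) = (K[X,Y,Z],(1,a,ab)) with integers a ≥ 2 and b ≥ 2. The ideal I = (X^{ab}, Y^b, X^{a+1}Y^{b−1}) is not lexifiable; in particular, the weighted polynomial ring (K[X,Y,Z],(1,a,ab)) is not Macaulay-Lex. -/

import Mathlib

open MvPolynomial

/-- The lexicographic order on exponents of monomials (`LexLT μ ν` means `X^μ < X^ν`),
for the variable order `X > Y > Z`. -/
def LexLT {n : ℕ} (μ ν : Fin n →₀ ℕ) : Prop :=
  ∃ k, μ k < ν k ∧ ∀ s, s < k → μ s = ν s

/-- The degree-`i` component of the ideal `I` is spanned, as a `K`-vector space, by a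
lexsegment. -/
def LexSegComponent {K : Type*} [Field K] {n : ℕ} (w : Fin n → ℕ)
    (I : Ideal (MvPolynomial (Fin n) K)) (i : ℕ) : Prop :=
  ∃ L : Set (Fin n →₀ ℕ),
    (∀ μ ∈ L, Finsupp.weight w μ = i) ∧
    (∀ μ ∈ L, ∀ ν : Fin n →₀ ℕ, Finsupp.weight w ν = i → LexLT μ ν → ν ∈ L) ∧
    (∀ f : MvPolynomial (Fin n) K,
      (f ∈ I ∧ f.IsWeightedHomogeneous w i) ↔
        f ∈ Submodule.span K
          ((fun μ => (monomial μ (1 : K) : MvPolynomial (Fin n) K)) '' L))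

/-- An ideal is lexicographic if each of its graded components is spanned by a
lexsegment. -/
def IsLexIdeal {K : Type*} [Field K] {n : ℕ} (w : Fin n → ℕ)
    (I : Ideal (MvPolynomial (Fin n) K)) : Prop :=
  ∀ i : ℕ, LexSegComponent w I i

/-- The Hilbert function of the ideal `I`: `H_I(t) = dim_K I_t`, the `K`-dimension of the
space of weighted homogeneous elements of degree `t` of `I`. -/
noncomputable def hilbertIdeal {K : Type*} [Field K] {n : ℕ} (w : Fin n → ℕ)
    (I : Ideal (MvPolynomial (Fin n) K)) (t : ℕ) : ℕ :=
  Module.finrank K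
    (Submodule.restrictScalars K I ⊓ weightedHomogeneousSubmodule K w t :
      Submodule K (MvPolynomial (Fin n) K))

/-- `I` is lexifiable: there is a lexicographic ideal with the same Hilbert function. -/
def Lexifiable {K : Type*} [Field K] {n : ℕ} (w : Fin n → ℕ)
    (I : Ideal (MvPolynomial (Fin n) K)) : Prop :=
  ∃ L : Ideal (MvPolynomial (Fin n) K),
    IsLexIdeal w L ∧ ∀ t : ℕ, hilbertIdeal w L t = hilbertIdeal w I t

namespace NML

noncomputable def m3 (x y z : ℕ) : Fin 3 →₀ ℕ :=
  Finsupp.single 0 x + Finsupp.single 1 y + Finsupp.single 2 z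

@[simp] lemma m3_0 (x y z : ℕ) : m3 x y z 0 = x := by simp [m3, Finsupp.single_apply]
@[simp] lemma m3_1 (x y z : ℕ) : m3 x y z 1 = y := by simp [m3, Finsupp.single_apply]
@[simp] lemma m3_2 (x y z : ℕ) : m3 x y z 2 = z := by simp [m3, Finsupp.single_apply]

lemma ext3 {μ ν : Fin 3 →₀ ℕ} (h0 : μ 0 = ν 0) (h1 : μ 1 = ν 1) (h2 : μ 2 = ν 2) :
    μ = ν := by ext i; fin_cases i <;> assumption

lemma wt (a b : ℕ) (μ : Fin 3 →₀ ℕ) :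
    (Finsupp.weight ![1, a, a*b] μ : ℕ) = μ 0 + μ 1 * a + μ 2 * (a*b) := by
  rw [Finsupp.weight_apply, Finsupp.sum_fintype _ _ (by intro i; simp)]
  rw [Fin.sum_univ_three]
  simp [Matrix.cons_val_zero, Matrix.cons_val_one, Matrix.head_cons, mul_comm]

lemma wt_m3 (a b x y z : ℕ) :
    (Finsupp.weight ![1, a, a*b] (m3 x y z) : ℕ) = x + a * (y + b*z) := by
  rw [wt]; simp only [m3_0, m3_1, m3_2]; ring

lemma lexlt_0 {μ ν : Fin 3 →₀ ℕ} (h : μ 0 < ν 0) : LexLT μ ν :=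
  ⟨0, h, fun s hs => absurd (Fin.lt_def.mp hs) (by simp)⟩

lemma lexlt_1 {μ ν : Fin 3 →₀ ℕ} (h0 : μ 0 = ν 0) (h : μ 1 < ν 1) : LexLT μ ν :=
  ⟨1, h, fun s hs => by
    have : s = 0 := Fin.ext (by have := Fin.lt_def.mp hs; omega)
    rw [this]; exact h0⟩

lemma lexlt_2 {μ ν : Fin 3 →₀ ℕ} (h0 : μ 0 = ν 0) (h1 : μ 1 = ν 1) (h : μ 2 < ν 2) :
    LexLT μ ν :=
  ⟨2, h, fun s hs => by
    have h' : s.val < 2 := by simpa using Fin.lt_def.mp hs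
    rcases (by omega : s.val = 0 ∨ s.val = 1) with h'' | h''
    · have : s = 0 := Fin.ext h''; rw [this]; exact h0
    · have : s = 1 := Fin.ext h''; rw [this]; exact h1⟩

lemma lexlt_elim {μ ν : Fin 3 →₀ ℕ} (h : LexLT μ ν) :
    μ 0 < ν 0 ∨ (μ 0 = ν 0 ∧ μ 1 < ν 1) ∨ (μ 0 = ν 0 ∧ μ 1 = ν 1 ∧ μ 2 < ν 2) := by
  obtain ⟨k, hk, hs⟩ := h
  fin_cases k
  · exact Or.inl hk
  · exact Or.inr (Or.inl ⟨hs 0 (by decide), hk⟩)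
  · exact Or.inr (Or.inr ⟨hs 0 (by decide), hs 1 (by decide), hk⟩)

lemma lexlt_total {μ ν : Fin 3 →₀ ℕ} (h : μ ≠ ν) : LexLT μ ν ∨ LexLT ν μ := by
  rcases lt_trichotomy (μ 0) (ν 0) with h0 | h0 | h0
  · exact Or.inl (lexlt_0 h0)
  · rcases lt_trichotomy (μ 1) (ν 1) with h1 | h1 | h1
    · exact Or.inl (lexlt_1 h0 h1)
    · rcases lt_trichotomy (μ 2) (ν 2) with h2 | h2 | h2
      · exact Or.inl (lexlt_2 h0 h1 h2)
      · exact absurd (ext3 h0 h1 h2) h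
      · exact Or.inr (lexlt_2 h0.symm h1.symm h2)
    · exact Or.inr (lexlt_1 h0.symm h1)
  · exact Or.inr (lexlt_0 h0)


/-! ### arithmetic helpers -/

lemma s_le {a u v M : ℕ} (ha : 2 ≤ a) (h : u + a*v = a*M + 1) : v ≤ M := by
  by_contra h'
  have h1 : a*(M+1) ≤ a*v := Nat.mul_le_mul_left a (by omega)
  have h2 : a*v ≤ a*M + 1 := le_trans (Nat.le_add_left _ _) (le_of_eq h)
  have h3 : a*(M+1) = a*M + a := by ring
  rw [h3] at h1
  have h4 : a*M + a ≤ a*M + 1 := h1.trans h2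
  have h5 : a ≤ 1 := Nat.le_of_add_le_add_left h4
  omega

lemma x_eq {a u v M : ℕ} (h : u + a*v = a*M + 1) (hvM : v ≤ M) :
    u = a*(M - v) + 1 := by
  have h2 : a*(M - v) + a*v = a*M := by
    rw [← Nat.mul_add]; congr 1; omega
  have h3 : (a*(M - v) + 1) + a*v = a*M + 1 := by
    rw [add_right_comm, h2]
  exact Nat.add_right_cancel (h.trans h3.symm)

lemma vi_lt {a u v i M : ℕ} (h : u + a*v = a*M + 1) (hu : a*i + 1 < u) : v + i < M := by
  have h2 : a*v + (a*i+1) < a*v + u := Nat.add_lt_add_left hu _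
  have h3 : a*v + u = a*M + 1 := by rw [add_comm]; exact h
  rw [h3] at h2
  have e : a*v + (a*i+1) = a*(v+i) + 1 := by ring
  rw [e] at h2
  have h6 : a*(v+i) < a*M := Nat.lt_of_succ_lt_succ h2
  exact Nat.lt_of_mul_lt_mul_left h6

lemma vi_eq {a u v i M : ℕ} (ha : 2 ≤ a) (h : u + a*v = a*M + 1) (hu : u = a*i + 1) :
    v + i = M := by
  subst hu
  have e : a*i + 1 + a*v = a*(i+v) + 1 := by ring
  have h2 : a*(i+v) + 1 = a*M + 1 := e.symm.trans h
  have h3 : a*(i+v) = a*M := Nat.add_right_cancel h2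
  have := Nat.eq_of_mul_eq_mul_left (by omega : 0 < a) h3
  omega

lemma z_le_one {b s y z M : ℕ} (hb : 1 ≤ b) (hs : s = y + b*z) (hsM : s ≤ M)
    (hM : M < 2*b) : z ≤ 1 := by
  by_contra h'
  have h1 : b*2 ≤ b*z := Nat.mul_le_mul_left b (by omega)
  have h2 : b*z ≤ s := hs ▸ Nat.le_add_left _ _
  have h3 : b*2 ≤ s := h1.trans h2
  omega

/-! ### the explicit monomial families -/

noncomputable def rho (a M j : ℕ) : Fin 3 →₀ ℕ := m3 (a * (M - j) + 1) j 0
noncomputable def sig (a b M j : ℕ) : Fin 3 →₀ ℕ := m3 (a * (M - b - j) + 1) j 1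

lemma wt_rho (a b M j : ℕ) (h : j ≤ M) :
    (Finsupp.weight ![1, a, a*b] (rho a M j) : ℕ) = a*M + 1 := by
  rw [rho, wt_m3]
  have e : (M - j) + (j + b*0) = M := by omega
  calc a*(M-j) + 1 + a*(j + b*0) = a*((M-j) + (j + b*0)) + 1 := by ring
  _ = a*M + 1 := by rw [e]

lemma wt_sig (a b M j : ℕ) (h : j + b ≤ M) :
    (Finsupp.weight ![1, a, a*b] (sig a b M j) : ℕ) = a*M + 1 := by
  rw [sig, wt_m3]
  have e : (M - b - j) + (j + b*1) = M := by omega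
  calc a*(M-b-j) + 1 + a*(j + b*1) = a*((M-b-j) + (j + b*1)) + 1 := by ring
  _ = a*M + 1 := by rw [e]

/-- degree-`a*(2b-1)+1` classification: monomials of `I` in that degree all lie in `E`. -/
lemma classify_E (a b : ℕ) (ha : 2 ≤ a) (hb : 2 ≤ b) (ν : Fin 3 →₀ ℕ)
    (hw : ν 0 + a*(ν 1 + b*ν 2) = a*(2*b-1) + 1)
    (hdom : a*b ≤ ν 0 ∨ b ≤ ν 1 ∨ (a+1 ≤ ν 0 ∧ b-1 ≤ ν 1)) :
    ν ∈ (Finset.range (2*b)).image (rho a (2*b-1)) := by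
  have hsM : ν 1 + b*ν 2 ≤ 2*b-1 := s_le ha hw
  have hz : ν 2 ≤ 1 := z_le_one (by omega) rfl hsM (by omega)
  have hz0 : ν 2 = 0 := by
    by_contra h'
    have hz1 : ν 2 = 1 := by omega
    rw [hz1, mul_one] at hw
    have hsM1 : ν 1 + b ≤ 2*b-1 := s_le ha hw
    rcases hdom with hd | hd | ⟨hd1, hd2⟩
    · have hx1 : ν 0 = a*((2*b-1) - (ν 1 + b)) + 1 := x_eq hw hsM1
      have h1 : (2*b-1) - (ν 1 + b) ≤ b - 1 := by omega
      have h2 : a*((2*b-1) - (ν 1 + b)) ≤ a*(b-1) := Nat.mul_le_mul_left a h1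
      have h3 : ν 0 ≤ a*(b-1) + 1 := by rw [hx1]; exact Nat.add_le_add_right h2 1
      have h4 : a*b ≤ a*(b-1) + 1 := hd.trans h3
      have h5 : a*(b-1) + a = a*b := by
        rw [← Nat.mul_succ]; congr 1; omega
      rw [← h5] at h4
      have h6 : a ≤ 1 := Nat.le_of_add_le_add_left h4
      omega
    · omega
    · have hs0 : (2*b-1) - (ν 1 + b) = 0 := by omega
      have hx1 : ν 0 = a*((2*b-1) - (ν 1 + b)) + 1 := x_eq hw hsM1
      rw [hs0, Nat.mul_zero] at hx1
      omega
  rw [hz0, mul_zero, add_zero] at hw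
  have hsM0 : ν 1 ≤ 2*b-1 := s_le ha hw
  refine Finset.mem_image.mpr ⟨ν 1, Finset.mem_range.mpr (by omega), ?_⟩
  refine ext3 ?_ ?_ ?_
  · show (rho a (2*b-1) (ν 1)) 0 = ν 0
    rw [rho, m3_0]
    exact (x_eq hw hsM0).symm
  · simp [rho]
  · simp [rho, hz0]

lemma amul_lt {a u v : ℕ} (ha : 2 ≤ a) (h : u < v) : a*u + 1 < a*v + 1 := by
  refine Nat.lt_succ_of_le ?_
  calc a*u + 1 ≤ a*u + a := Nat.add_le_add_left (by omega) _
  _ = a*(u+1) := by ring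
  _ ≤ a*v := Nat.mul_le_mul_left a (Nat.succ_le_of_lt h)

lemma classify_T_even (a c' : ℕ) (ha : 2 ≤ a) (ν : Fin 3 →₀ ℕ)
    (hw : ν 0 + a*(ν 1 + (2*c'+2)*ν 2) = a*(4*c'+2) + 1)
    (hlex : LexLT (m3 (a*c'+1) (3*c'+2) 0) ν) :
    ν ∈ (Finset.range (4*c'+2)).image
      (fun j => if j < 3*c'+2 then rho a (4*c'+2) j
        else sig a (2*c'+2) (4*c'+2) (j - (3*c'+2))) := by
  have hsM : ν 1 + (2*c'+2)*ν 2 ≤ 4*c'+2 := s_le ha hw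
  have hz : ν 2 ≤ 1 := z_le_one (by omega) rfl hsM (by omega)
  rcases lexlt_elim hlex with h0 | ⟨h0, h1⟩ | ⟨h0, h1, h2⟩
  · simp only [m3_0] at h0
    have hlt : (ν 1 + (2*c'+2)*ν 2) + c' < 4*c'+2 := vi_lt hw h0
    rcases (by omega : ν 2 = 0 ∨ ν 2 = 1) with hz0 | hz1
    · rw [hz0, mul_zero, add_zero] at hw hlt
      refine Finset.mem_image.mpr ⟨ν 1, Finset.mem_range.mpr (by omega), ?_⟩
      rw [if_pos (by omega)]
      refine ext3 ?_ (by simp [rho]) (by simp [rho, hz0])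
      rw [rho, m3_0]
      exact (x_eq hw (by omega)).symm
    · rw [hz1, mul_one] at hw hlt
      refine Finset.mem_image.mpr ⟨3*c'+2 + ν 1, Finset.mem_range.mpr (by omega), ?_⟩
      rw [if_neg (by omega)]
      have hj : (3*c'+2 + ν 1) - (3*c'+2) = ν 1 := by omega
      rw [hj]
      refine ext3 ?_ (by simp [sig]) (by simp [sig, hz1])
      rw [sig, m3_0]
      have he : 4*c'+2 - (2*c'+2) - ν 1 = 4*c'+2 - (ν 1 + (2*c'+2)) := by omega
      rw [he]
      exact (x_eq hw (by omega)).symm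
  · simp only [m3_0, m3_1] at h0 h1
    have hveq : (ν 1 + (2*c'+2)*ν 2) + c' = 4*c'+2 := vi_eq ha hw h0.symm
    rcases (by omega : ν 2 = 0 ∨ ν 2 = 1) with hz0 | hz1
    · rw [hz0, mul_zero, add_zero] at hveq; omega
    · rw [hz1, mul_one] at hveq; omega
  · simp only [m3_0, m3_1, m3_2] at h0 h1 h2
    have hveq : (ν 1 + (2*c'+2)*ν 2) + c' = 4*c'+2 := vi_eq ha hw h0.symm
    rcases (by omega : ν 2 = 0 ∨ ν 2 = 1) with hz0 | hz1
    · omega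
    · rw [hz1, mul_one] at hveq; omega

lemma classify_T_odd (a c' : ℕ) (ha : 2 ≤ a) (ν : Fin 3 →₀ ℕ)
    (hw : ν 0 + a*(ν 1 + (2*c'+3)*ν 2) = a*(4*c'+4) + 1)
    (hlex : LexLT (m3 (a*(c'+1)+1) c' 1) ν) :
    ν ∈ (Finset.range (4*c'+4)).image
      (fun j => if j < 3*c'+4 then rho a (4*c'+4) j
        else sig a (2*c'+3) (4*c'+4) (j - (3*c'+4))) := by
  have hsM : ν 1 + (2*c'+3)*ν 2 ≤ 4*c'+4 := s_le ha hw
  have hz : ν 2 ≤ 1 := z_le_one (by omega) rfl hsM (by omega)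
  rcases lexlt_elim hlex with h0 | ⟨h0, h1⟩ | ⟨h0, h1, h2⟩
  · simp only [m3_0] at h0
    have hlt : (ν 1 + (2*c'+3)*ν 2) + (c'+1) < 4*c'+4 := vi_lt hw h0
    rcases (by omega : ν 2 = 0 ∨ ν 2 = 1) with hz0 | hz1
    · rw [hz0, mul_zero, add_zero] at hw hlt
      refine Finset.mem_image.mpr ⟨ν 1, Finset.mem_range.mpr (by omega), ?_⟩
      rw [if_pos (by omega)]
      refine ext3 ?_ (by simp [rho]) (by simp [rho, hz0])
      rw [rho, m3_0]
      exact (x_eq hw (by omega)).symm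
    · rw [hz1, mul_one] at hw hlt
      refine Finset.mem_image.mpr ⟨3*c'+4 + ν 1, Finset.mem_range.mpr (by omega), ?_⟩
      rw [if_neg (by omega)]
      have hj : (3*c'+4 + ν 1) - (3*c'+4) = ν 1 := by omega
      rw [hj]
      refine ext3 ?_ (by simp [sig]) (by simp [sig, hz1])
      rw [sig, m3_0]
      have he : 4*c'+4 - (2*c'+3) - ν 1 = 4*c'+4 - (ν 1 + (2*c'+3)) := by omega
      rw [he]
      exact (x_eq hw (by omega)).symm
  · simp only [m3_0, m3_1] at h0 h1
    have hveq : (ν 1 + (2*c'+3)*ν 2) + (c'+1) = 4*c'+4 := vi_eq ha hw h0.symm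
    rcases (by omega : ν 2 = 0 ∨ ν 2 = 1) with hz0 | hz1
    · -- ν 1 = 3c'+3, top extra element
      rw [hz0, mul_zero, add_zero] at hw hveq
      refine Finset.mem_image.mpr ⟨ν 1, Finset.mem_range.mpr (by omega), ?_⟩
      rw [if_pos (by omega)]
      refine ext3 ?_ (by simp [rho]) (by simp [rho, hz0])
      rw [rho, m3_0]
      exact (x_eq hw (by omega)).symm
    · rw [hz1, mul_one] at hveq; omega
  · simp only [m3_0, m3_1, m3_2] at h0 h1 h2
    omega

/-! ### the family above `μ̂·Y` in degree `t+a`, and the families `G`, `E` -/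

noncomputable def Rf_even (a c' : ℕ) (j : ℕ) : Fin 3 →₀ ℕ :=
  if j < 3*c'+4 then rho a (4*c'+3) j else sig a (2*c'+2) (4*c'+3) (j - (3*c'+4))

noncomputable def Rf_odd (a c' : ℕ) (j : ℕ) : Fin 3 →₀ ℕ :=
  if j < 3*c'+5 then rho a (4*c'+5) j else sig a (2*c'+3) (4*c'+5) (j - (3*c'+5))

lemma Rf_even_wt (a c' : ℕ) (j : ℕ) (hj : j < 4*c'+5) :
    (Finsupp.weight ![1, a, a*(2*c'+2)] (Rf_even a c' j) : ℕ) = a*(4*c'+3) + 1 := by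
  rw [Rf_even]
  split_ifs with h
  · exact wt_rho a (2*c'+2) _ _ (by omega)
  · exact wt_sig a (2*c'+2) _ _ (by omega)

lemma Rf_odd_wt (a c' : ℕ) (j : ℕ) (hj : j < 4*c'+7) :
    (Finsupp.weight ![1, a, a*(2*c'+3)] (Rf_odd a c' j) : ℕ) = a*(4*c'+5) + 1 := by
  rw [Rf_odd]
  split_ifs with h
  · exact wt_rho a (2*c'+3) _ _ (by omega)
  · exact wt_sig a (2*c'+3) _ _ (by omega)

lemma Rf_even_mem (a c' : ℕ) (ha : 2 ≤ a) (j : ℕ) (hj : j < 4*c'+5) :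
    Rf_even a c' j = m3 (a*c'+1) (3*c'+3) 0 ∨
      LexLT (m3 (a*c'+1) (3*c'+3) 0) (Rf_even a c' j) := by
  rw [Rf_even]
  split_ifs with h
  · rcases (by omega : j = 3*c'+3 ∨ j < 3*c'+3) with hj3 | hj3
    · left
      rw [rho, hj3]
      have e : 4*c'+3 - (3*c'+3) = c' := by omega
      rw [e]
    · right
      refine lexlt_0 ?_
      rw [rho, m3_0, m3_0]
      exact amul_lt ha (by omega)
  · right
    refine lexlt_0 ?_
    rw [sig, m3_0, m3_0]
    exact amul_lt ha (by omega)

lemma Rf_odd_mem (a c' : ℕ) (ha : 2 ≤ a) (j : ℕ) (hj : j < 4*c'+7) :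
    Rf_odd a c' j = m3 (a*(c'+1)+1) (c'+1) 1 ∨
      LexLT (m3 (a*(c'+1)+1) (c'+1) 1) (Rf_odd a c' j) := by
  rw [Rf_odd]
  split_ifs with h
  · rcases (by omega : j = 3*c'+4 ∨ j < 3*c'+4) with hj3 | hj3
    · right
      refine lexlt_1 ?_ ?_
      · rw [rho, m3_0, m3_0, hj3]
        congr 2
        omega
      · rw [rho, m3_1, m3_1]; omega
    · right
      refine lexlt_0 ?_
      rw [rho, m3_0, m3_0]
      exact amul_lt ha (by omega)
  · rcases (by omega : j = 4*c'+6 ∨ j < 4*c'+6) with hj3 | hj3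
    · left
      rw [sig, hj3]
      have e1 : 4*c'+6 - (3*c'+5) = c'+1 := by omega
      have e2 : 4*c'+5 - (2*c'+3) - (c'+1) = c'+1 := by omega
      rw [e1, e2]
    · right
      refine lexlt_0 ?_
      rw [sig, m3_0, m3_0]
      exact amul_lt ha (by omega)

lemma Rf_even_inj (a c' : ℕ) : Set.InjOn (Rf_even a c') ↑(Finset.range (4*c'+5)) := by
  intro j1 h1 j2 h2 heq
  simp only [Finset.coe_range, Set.mem_Iio] at h1 h2
  have e1 := congrArg (fun g => g 1) heq
  have e2 := congrArg (fun g => g 2) heq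
  simp only [Rf_even] at e1 e2
  split_ifs at e1 e2 with hc1 hc2 hc2 <;>
    simp only [rho, sig, m3_1, m3_2] at e1 e2 <;> omega

lemma Rf_odd_inj (a c' : ℕ) : Set.InjOn (Rf_odd a c') ↑(Finset.range (4*c'+7)) := by
  intro j1 h1 j2 h2 heq
  simp only [Finset.coe_range, Set.mem_Iio] at h1 h2
  have e1 := congrArg (fun g => g 1) heq
  have e2 := congrArg (fun g => g 2) heq
  simp only [Rf_odd] at e1 e2
  split_ifs at e1 e2 with hc1 hc2 hc2 <;>
    simp only [rho, sig, m3_1, m3_2] at e1 e2 <;> omega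

lemma G_inj (a M : ℕ) : Set.InjOn (rho a M) ↑(Finset.range (M+1)) := by
  intro j1 _ j2 _ heq
  have e1 := congrArg (fun g => g 1) heq
  simp only [rho, m3_1] at e1
  exact e1

lemma G_dom (a b : ℕ) (ha : 2 ≤ a) (hb : 2 ≤ b) (j : ℕ) (hj : j < 2*b-1) :
    a*b ≤ (rho a (2*b-2) j) 0 ∨ b ≤ (rho a (2*b-2) j) 1 ∨
      (a+1 ≤ (rho a (2*b-2) j) 0 ∧ b-1 ≤ (rho a (2*b-2) j) 1) := by
  rw [rho, m3_0, m3_1]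
  rcases (by omega : j ≤ b-2 ∨ j = b-1 ∨ b ≤ j) with hc | hc | hc
  · left
    have h1 : b ≤ 2*b-2-j := by omega
    have h2 : a*b ≤ a*(2*b-2-j) := Nat.mul_le_mul_left a h1
    omega
  · right; right
    constructor
    · have h1 : 1 ≤ 2*b-2-j := by omega
      have h2 : a*1 ≤ a*(2*b-2-j) := Nat.mul_le_mul_left a h1
      omega
    · omega
  · right; left; omega

variable {K : Type*} [Field K]

lemma mem_span_monomial_of_support {f : MvPolynomial (Fin 3) K} {S : Set (Fin 3 →₀ ℕ)}
    (h : ∀ d ∈ f.support, d ∈ S) :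
    f ∈ Submodule.span K ((fun μ => (monomial μ (1:K))) '' S) := by
  rw [show f = ∑ d ∈ f.support, monomial d (coeff d f) from (support_sum_monomial_coeff f).symm]
  refine Submodule.sum_mem _ fun d hd => ?_
  have he : (monomial d (coeff d f) : MvPolynomial (Fin 3) K) = coeff d f • monomial d 1 := by
    simp [smul_monomial]
  rw [he]
  exact Submodule.smul_mem _ _ (Submodule.subset_span ⟨d, h d hd, rfl⟩)

lemma mem_of_monomial_mem_span {ν : Fin 3 →₀ ℕ} {S : Set (Fin 3 →₀ ℕ)}
    (h : (monomial ν (1:K)) ∈ Submodule.span K ((fun μ => (monomial μ (1:K))) '' S)) :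
    ν ∈ S := by
  by_contra hν
  have hle : Submodule.span K ((fun μ => (monomial μ (1:K))) '' S)
      ≤ LinearMap.ker (lcoeff K ν) := by
    rw [Submodule.span_le]
    rintro _ ⟨μ, hμ, rfl⟩
    simp only [SetLike.mem_coe, LinearMap.mem_ker, lcoeff_apply, coeff_monomial]
    rw [if_neg]; rintro rfl; exact hν hμ
  have h2 := hle h
  simp [LinearMap.mem_ker, lcoeff_apply, coeff_monomial] at h2

lemma finrank_span_image_finset (F : Finset (Fin 3 →₀ ℕ)) :
    Module.finrank K (Submodule.span K ((fun μ => (monomial μ (1:K))) '' (↑F : Set (Fin 3 →₀ ℕ)))) = F.card := by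
  have hind : LinearIndependent K (fun μ : F => (monomial μ.1 (1:K))) := by
    have h0 := (basisMonomials (Fin 3) K).linearIndependent
    rw [coe_basisMonomials] at h0
    exact h0.comp Subtype.val Subtype.val_injective
  have himg : (fun μ => (monomial μ (1:K))) '' ↑F
      = Set.range (fun μ : F => (monomial μ.1 (1:K))) := Set.image_eq_range _ _
  rw [himg, finrank_span_eq_card hind, Fintype.card_coe]

lemma finrank_le_of_le_span {p : Submodule K (MvPolynomial (Fin 3) K)}
    {F : Finset (Fin 3 →₀ ℕ)}
    (h : p ≤ Submodule.span K ((fun μ => (monomial μ (1:K))) '' ↑F)) :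
    Module.finrank K p ≤ F.card := by
  haveI := FiniteDimensional.span_of_finite K (F.finite_toSet.image (fun μ => (monomial μ (1:K))))
  exact (Submodule.finrank_mono h).trans (le_of_eq (finrank_span_image_finset F))

lemma card_le_finrank {p : Submodule K (MvPolynomial (Fin 3) K)} [FiniteDimensional K p]
    {F : Finset (Fin 3 →₀ ℕ)}
    (h : Submodule.span K ((fun μ => (monomial μ (1:K))) '' ↑F) ≤ p) :
    F.card ≤ Module.finrank K p := by
  rw [← finrank_span_image_finset (K := K) F]
  exact Submodule.finrank_mono h

lemma fd_homog (w : Fin 3 → ℕ) (hw : ∀ x, w x ≠ 0) (t : ℕ) :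
    FiniteDimensional K (weightedHomogeneousSubmodule K w t) := by
  have hfin := (Finsupp.finite_of_nat_weight_le w hw t).image (fun μ => (monomial μ (1:K)))
  haveI := FiniteDimensional.span_of_finite K hfin
  refine Submodule.finiteDimensional_of_le
    (S₂ := Submodule.span K ((fun μ => (monomial μ (1:K))) ''
      {d : Fin 3 →₀ ℕ | Finsupp.weight w d ≤ t})) ?_
  intro f hf
  refine mem_span_monomial_of_support fun d hd => ?_
  have := (mem_weightedHomogeneousSubmodule _ _ _ _).mp hf (mem_support_iff.mp hd)
  simp only [Set.mem_setOf_eq, this, le_refl]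

/-! ### conversion and the core contradiction -/

lemma le3 {μ ν : Fin 3 →₀ ℕ} : μ ≤ ν ↔ (μ 0 ≤ ν 0 ∧ μ 1 ≤ ν 1 ∧ μ 2 ≤ ν 2) := by
  rw [Finsupp.le_def]
  constructor
  · intro h; exact ⟨h 0, h 1, h 2⟩
  · rintro ⟨h0, h1, h2⟩ i; fin_cases i <;> assumption

lemma wt_conv {a b M : ℕ} {ν : Fin 3 →₀ ℕ}
    (h : (Finsupp.weight ![1, a, a*b] ν : ℕ) = a*M + 1) :
    ν 0 + a*(ν 1 + b*ν 2) = a*M + 1 := by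
  rw [← h, wt]; ring

lemma dom_iff (a b : ℕ) (d : Fin 3 →₀ ℕ) :
    (∃ si ∈ ({Finsupp.single 0 (a*b), Finsupp.single 1 b,
        Finsupp.single 0 (a+1) + Finsupp.single 1 (b-1)} : Set (Fin 3 →₀ ℕ)), si ≤ d) ↔
      (a*b ≤ d 0 ∨ b ≤ d 1 ∨ (a+1 ≤ d 0 ∧ b-1 ≤ d 1)) := by
  constructor
  · rintro ⟨si, hsi, hle⟩
    rw [le3] at hle
    simp only [Set.mem_insert_iff, Set.mem_singleton_iff] at hsi
    obtain ⟨h0, h1, -⟩ := hle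
    rcases hsi with rfl | rfl | rfl
    · left; simpa using h0
    · right; left; simpa using h1
    · right; right
      refine ⟨?_, ?_⟩
      · simpa using h0
      · simpa using h1
  · intro h
    rcases h with h | h | ⟨h1, h2⟩
    · exact ⟨_, Set.mem_insert _ _,
        le3.mpr ⟨by simpa using h, by simp, by simp⟩⟩
    · refine ⟨Finsupp.single 1 b, by simp, le3.mpr ⟨by simp, by simpa using h, by simp⟩⟩
    · refine ⟨Finsupp.single 0 (a+1) + Finsupp.single 1 (b-1), by simp,
        le3.mpr ⟨by simpa using h1, by simpa using h2, by simp⟩⟩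

variable {K : Type*} [Field K]

lemma core (a b : ℕ) (ha : 2 ≤ a) (hb : 2 ≤ b)
    (μh : Fin 3 →₀ ℕ)
    (hμh_wt : (Finsupp.weight ![1, a, a*b] μh : ℕ) = a*(2*b-2) + 1)
    (Tfin : Finset (Fin 3 →₀ ℕ)) (hT_card : Tfin.card ≤ 2*b-2)
    (hclassT : ∀ ν : Fin 3 →₀ ℕ, (Finsupp.weight ![1, a, a*b] ν : ℕ) = a*(2*b-2) + 1 →
      LexLT μh ν → ν ∈ Tfin)
    (μY : Fin 3 →₀ ℕ) (hμY : μY = μh + Finsupp.single 1 1)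
    (hμY_wt : (Finsupp.weight ![1, a, a*b] μY : ℕ) = a*(2*b-1) + 1)
    (Rf : ℕ → Fin 3 →₀ ℕ)
    (hRwt : ∀ j < 2*b+1, (Finsupp.weight ![1, a, a*b] (Rf j) : ℕ) = a*(2*b-1) + 1)
    (hRmem : ∀ j < 2*b+1, Rf j = μY ∨ LexLT μY (Rf j))
    (hRinj : Set.InjOn Rf ↑(Finset.range (2*b+1))) :
    ¬ Lexifiable ![1, a, a*b]
        (Ideal.span
          {(monomial (Finsupp.single 0 (a * b)) (1 : K) : MvPolynomial (Fin 3) K),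
           monomial (Finsupp.single 1 b) 1,
           monomial (Finsupp.single 0 (a + 1) + Finsupp.single 1 (b - 1)) 1}) := by
  rintro ⟨L, hlex, hH⟩
  set I : Ideal (MvPolynomial (Fin 3) K) := Ideal.span
    {(monomial (Finsupp.single 0 (a * b)) (1 : K) : MvPolynomial (Fin 3) K),
     monomial (Finsupp.single 1 b) 1,
     monomial (Finsupp.single 0 (a + 1) + Finsupp.single 1 (b - 1)) 1} with hI
  have hwpos : ∀ x : Fin 3, ![1, a, a*b] x ≠ 0 := by
    intro x
    fin_cases x
    · simp
    · simp; omega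
    · simp only [Matrix.cons_val_two, Matrix.tail_cons, Matrix.head_cons]
      exact Nat.mul_ne_zero (by omega) (by omega)
  have hmemI : ∀ f : MvPolynomial (Fin 3) K,
      f ∈ I ↔ ∀ d ∈ f.support, a*b ≤ d 0 ∨ b ≤ d 1 ∨ (a+1 ≤ d 0 ∧ b-1 ≤ d 1) := by
    intro f
    have hIgens : ({(monomial (Finsupp.single 0 (a * b)) (1 : K) : MvPolynomial (Fin 3) K),
        monomial (Finsupp.single 1 b) 1,
        monomial (Finsupp.single 0 (a + 1) + Finsupp.single 1 (b - 1)) 1} :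
          Set (MvPolynomial (Fin 3) K))
        = (fun s => (monomial s (1:K) : MvPolynomial (Fin 3) K)) ''
            {Finsupp.single 0 (a*b), Finsupp.single 1 b,
             Finsupp.single 0 (a+1) + Finsupp.single 1 (b-1)} := by
      rw [Set.image_insert_eq, Set.image_insert_eq, Set.image_singleton]
    rw [hI, hIgens, mem_ideal_span_monomial_image]
    exact forall₂_congr fun d _ => dom_iff a b d
  obtain ⟨S, hS1, hS2, hS3⟩ := hlex (a*(2*b-2) + 1)
  obtain ⟨S', hS1', hS2', hS3'⟩ := hlex (a*(2*b-1) + 1)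
  haveI hfd0 := fd_homog (K := K) ![1, a, a*b] hwpos (a*(2*b-2) + 1)
  haveI hfd1 := fd_homog (K := K) ![1, a, a*b] hwpos (a*(2*b-1) + 1)
  -- Hilbert functions of L are the spans of the lex segments
  have hspan0 : (Submodule.restrictScalars K L ⊓
      weightedHomogeneousSubmodule K ![1, a, a*b] (a*(2*b-2) + 1))
      = Submodule.span K ((fun μ => (monomial μ (1:K) : MvPolynomial (Fin 3) K)) '' S) := by
    ext f
    rw [Submodule.mem_inf, Submodule.restrictScalars_mem, mem_weightedHomogeneousSubmodule]
    exact hS3 f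
  have hspan1 : (Submodule.restrictScalars K L ⊓
      weightedHomogeneousSubmodule K ![1, a, a*b] (a*(2*b-1) + 1))
      = Submodule.span K ((fun μ => (monomial μ (1:K) : MvPolynomial (Fin 3) K)) '' S') := by
    ext f
    rw [Submodule.mem_inf, Submodule.restrictScalars_mem, mem_weightedHomogeneousSubmodule]
    exact hS3' f
  have hHL0 : hilbertIdeal ![1, a, a*b] L (a*(2*b-2) + 1)
      = Module.finrank K (Submodule.span K
          ((fun μ => (monomial μ (1:K) : MvPolynomial (Fin 3) K)) '' S)) := by
    rw [hilbertIdeal, hspan0]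
  have hHL1 : hilbertIdeal ![1, a, a*b] L (a*(2*b-1) + 1)
      = Module.finrank K (Submodule.span K
          ((fun μ => (monomial μ (1:K) : MvPolynomial (Fin 3) K)) '' S')) := by
    rw [hilbertIdeal, hspan1]
  -- lower bound for H_I in degree a(2b-2)+1
  have hGspan : Submodule.span K ((fun μ => (monomial μ (1:K) : MvPolynomial (Fin 3) K)) ''
        ↑((Finset.range (2*b-1)).image (rho a (2*b-2))))
      ≤ (Submodule.restrictScalars K I ⊓
          weightedHomogeneousSubmodule K ![1, a, a*b] (a*(2*b-2) + 1)) := by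
    rw [Submodule.span_le]
    rintro _ ⟨μ, hμ, rfl⟩
    simp only [Finset.coe_image, Set.mem_image, Finset.coe_range, Set.mem_Iio] at hμ
    obtain ⟨j, hj, rfl⟩ := hμ
    refine SetLike.mem_coe.mpr (Submodule.mem_inf.mpr ⟨?_, ?_⟩)
    · rw [Submodule.restrictScalars_mem, hmemI]
      intro d hd
      classical
      rw [support_monomial] at hd
      split_ifs at hd with h10
      · exact absurd h10 one_ne_zero
      · rw [Finset.mem_singleton] at hd
        subst hd
        exact G_dom a b ha hb j hj
    · rw [mem_weightedHomogeneousSubmodule]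
      exact isWeightedHomogeneous_monomial _ _ _ (wt_rho a b (2*b-2) j (by omega))
  have hHI0 : 2*b-1 ≤ hilbertIdeal ![1, a, a*b] I (a*(2*b-2) + 1) := by
    haveI : FiniteDimensional K ((Submodule.restrictScalars K I ⊓
        weightedHomogeneousSubmodule K ![1, a, a*b] (a*(2*b-2) + 1) :
          Submodule K (MvPolynomial (Fin 3) K))) :=
      Submodule.finiteDimensional_of_le inf_le_right
    have hcard : ((Finset.range (2*b-1)).image (rho a (2*b-2))).card = 2*b-1 := by
      rw [Finset.card_image_of_injOn, Finset.card_range]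
      intro x hx y hy hxy
      refine G_inj a (2*b-2) ?_ ?_ hxy <;>
        simp only [Finset.coe_range, Set.mem_Iio] at hx hy ⊢ <;> omega
    rw [hilbertIdeal, ← hcard]
    exact card_le_finrank hGspan
  -- upper bound for H_I in degree a(2b-1)+1
  have hHI1 : hilbertIdeal ![1, a, a*b] I (a*(2*b-1) + 1) ≤ 2*b := by
    have hEsub : (Submodule.restrictScalars K I ⊓
        weightedHomogeneousSubmodule K ![1, a, a*b] (a*(2*b-1) + 1))
        ≤ Submodule.span K ((fun μ => (monomial μ (1:K) : MvPolynomial (Fin 3) K)) ''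
            ↑((Finset.range (2*b)).image (rho a (2*b-1)))) := by
      intro f hf
      obtain ⟨hf1, hf2⟩ := Submodule.mem_inf.mp hf
      refine mem_span_monomial_of_support fun d hd => ?_
      refine Finset.mem_coe.mpr (classify_E a b ha hb d ?_ ?_)
      · exact wt_conv (hf2 (mem_support_iff.mp hd))
      · exact (hmemI f).mp hf1 d hd
    calc hilbertIdeal ![1, a, a*b] I (a*(2*b-1) + 1)
        ≤ ((Finset.range (2*b)).image (rho a (2*b-1))).card :=
          finrank_le_of_le_span hEsub
    _ ≤ 2*b := le_trans Finset.card_image_le (by rw [Finset.card_range])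
  -- the top element μh belongs to the lex segment S
  have hSfin : S.Finite :=
    Set.Finite.subset (Finsupp.finite_of_nat_weight_le _ hwpos (a*(2*b-2) + 1))
      (fun μ hμ => le_of_eq (hS1 μ hμ))
  have hμhS : μh ∈ S := by
    by_contra hns
    have hsubT : S ⊆ ↑Tfin := by
      intro ν hν
      have hne : ν ≠ μh := fun h => hns (h ▸ hν)
      have hnl : ¬ LexLT ν μh := fun hl => hns (hS2 ν hν μh hμh_wt hl)
      have hlex := (lexlt_total hne).resolve_left hnl
      exact Finset.mem_coe.mpr (hclassT ν (hS1 ν hν) hlex)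
    have hle : Module.finrank K (Submodule.span K
        ((fun μ => (monomial μ (1:K) : MvPolynomial (Fin 3) K)) '' S)) ≤ Tfin.card :=
      finrank_le_of_le_span (Submodule.span_mono (Set.image_mono hsubT))
    have h1 := hH (a*(2*b-2) + 1)
    omega
  -- μY = μh * Y belongs to L, hence to the lex segment S'
  have hμhL : (monomial μh (1:K) : MvPolynomial (Fin 3) K) ∈ L :=
    ((hS3 _).mpr (Submodule.subset_span ⟨μh, hμhS, rfl⟩)).1
  have hprod : (monomial μY (1:K) : MvPolynomial (Fin 3) K)
      = monomial (Finsupp.single 1 1) (1:K) * monomial μh 1 := by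
    rw [monomial_mul, one_mul, hμY, add_comm]
  have hμYL : (monomial μY (1:K) : MvPolynomial (Fin 3) K) ∈ L := by
    rw [hprod]; exact Ideal.mul_mem_left _ _ hμhL
  have hμYS' : μY ∈ S' :=
    mem_of_monomial_mem_span ((hS3' _).mp
      ⟨hμYL, isWeightedHomogeneous_monomial _ _ _ hμY_wt⟩)
  have hRS' : ∀ j < 2*b+1, Rf j ∈ S' := by
    intro j hj
    rcases hRmem j hj with he | hl
    · rw [he]; exact hμYS'
    · exact hS2' μY hμYS' _ (hRwt j hj) hl
  -- finrank lower bound in degree a(2b-1)+1 for L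
  have hS'fin : S'.Finite :=
    Set.Finite.subset (Finsupp.finite_of_nat_weight_le _ hwpos (a*(2*b-1) + 1))
      (fun μ hμ => le_of_eq (hS1' μ hμ))
  haveI : FiniteDimensional K (Submodule.span K
      ((fun μ => (monomial μ (1:K) : MvPolynomial (Fin 3) K)) '' S')) :=
    FiniteDimensional.span_of_finite K (hS'fin.image _)
  have hRsub : Submodule.span K ((fun μ => (monomial μ (1:K) : MvPolynomial (Fin 3) K)) ''
        ↑((Finset.range (2*b+1)).image Rf))
      ≤ Submodule.span K ((fun μ => (monomial μ (1:K) : MvPolynomial (Fin 3) K)) '' S') := by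
    refine Submodule.span_mono (Set.image_mono ?_)
    intro ν hν
    obtain ⟨j, hj, rfl⟩ := Finset.mem_image.mp (Finset.mem_coe.mp hν)
    exact hRS' j (Finset.mem_range.mp hj)
  have hRcard : ((Finset.range (2*b+1)).image Rf).card = 2*b+1 := by
    rw [Finset.card_image_of_injOn hRinj, Finset.card_range]
  have hfinal : 2*b+1 ≤ Module.finrank K (Submodule.span K
      ((fun μ => (monomial μ (1:K) : MvPolynomial (Fin 3) K)) '' S')) := by
    rw [← hRcard]
    exact card_le_finrank hRsub
  have h1 := hH (a*(2*b-1) + 1)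
  omega


lemma memI_iff (a b : ℕ) (f : MvPolynomial (Fin 3) K) :
    f ∈ Ideal.span
      {(monomial (Finsupp.single 0 (a * b)) (1 : K) : MvPolynomial (Fin 3) K),
       monomial (Finsupp.single 1 b) 1,
       monomial (Finsupp.single 0 (a + 1) + Finsupp.single 1 (b - 1)) 1}
    ↔ ∀ d ∈ f.support, a*b ≤ d 0 ∨ b ≤ d 1 ∨ (a+1 ≤ d 0 ∧ b-1 ≤ d 1) := by
  have hIgens : ({(monomial (Finsupp.single 0 (a * b)) (1 : K) : MvPolynomial (Fin 3) K),
      monomial (Finsupp.single 1 b) 1,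
      monomial (Finsupp.single 0 (a + 1) + Finsupp.single 1 (b - 1)) 1} :
        Set (MvPolynomial (Fin 3) K))
      = (fun s => (monomial s (1:K) : MvPolynomial (Fin 3) K)) ''
          {Finsupp.single 0 (a*b), Finsupp.single 1 b,
           Finsupp.single 0 (a+1) + Finsupp.single 1 (b-1)} := by
    rw [Set.image_insert_eq, Set.image_insert_eq, Set.image_singleton]
  rw [hIgens, mem_ideal_span_monomial_image]
  exact forall₂_congr fun d _ => dom_iff a b d

end NML

/-- **`(K[X,Y,Z],(1,a,ab))` is not Macaulay-Lex.**
Let `R = K[X,Y,Z]` with `deg X = 1`, `deg Y = a`, `deg Z = a·b` (`a, b ≥ 2`), over an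
infinite field of characteristic `0`.  The ideal `I = (X^{ab}, Y^b, X^{a+1} Y^{b-1})` is
not lexifiable; in particular `R` is not Macaulay-Lex. -/
theorem one_a_ab_not_macaulay_lex
    (K : Type*) [Field K] [CharZero K]
    (a b : ℕ) (ha : 2 ≤ a) (hb : 2 ≤ b) :
    ¬ Lexifiable ![1, a, a * b]
        (Ideal.span
          {(monomial (Finsupp.single 0 (a * b)) (1 : K) : MvPolynomial (Fin 3) K),
           monomial (Finsupp.single 1 b) 1,
           monomial (Finsupp.single 0 (a + 1) + Finsupp.single 1 (b - 1)) 1})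
    ∧
    ¬ (∀ J : Ideal (MvPolynomial (Fin 3) K),
        (∀ f ∈ J, ∀ e : ℕ, weightedHomogeneousComponent ![1, a, a * b] e f ∈ J) →
        Lexifiable ![1, a, a * b] J) := by
  obtain ⟨c', hbc⟩ : ∃ c', b = 2*c'+2 ∨ b = 2*c'+3 := ⟨(b-2)/2, by omega⟩
  have key : ¬ Lexifiable ![1, a, a * b]
      (Ideal.span
        {(monomial (Finsupp.single 0 (a * b)) (1 : K) : MvPolynomial (Fin 3) K),
         monomial (Finsupp.single 1 b) 1,
         monomial (Finsupp.single 0 (a + 1) + Finsupp.single 1 (b - 1)) 1}) := by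
    rcases hbc with rfl | rfl
    · -- b even
      have e0 : 2*(2*c'+2)-2 = 4*c'+2 := by omega
      have e1 : 2*(2*c'+2)-1 = 4*c'+3 := by omega
      refine NML.core a (2*c'+2) ha hb (NML.m3 (a*c'+1) (3*c'+2) 0) ?_
        ((Finset.range (4*c'+2)).image
          (fun j => if j < 3*c'+2 then NML.rho a (4*c'+2) j
            else NML.sig a (2*c'+2) (4*c'+2) (j - (3*c'+2)))) ?_ ?_
        (NML.m3 (a*c'+1) (3*c'+3) 0) ?_ ?_ (NML.Rf_even a c') ?_ ?_ ?_
      · rw [NML.wt_m3, e0]; ring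
      · refine le_trans Finset.card_image_le ?_
        rw [Finset.card_range]; omega
      · intro ν hw hlex
        have hw' := NML.wt_conv hw
        rw [e0] at hw'
        exact NML.classify_T_even a c' ha ν hw' hlex
      · refine NML.ext3 ?_ ?_ ?_ <;>
          simp [Finsupp.add_apply, Finsupp.single_apply]
      · rw [NML.wt_m3, e1]; ring
      · intro j hj
        rw [e1]
        exact NML.Rf_even_wt a c' j (by omega)
      · intro j hj
        exact NML.Rf_even_mem a c' ha j (by omega)
      · have e2 : 2*(2*c'+2)+1 = 4*c'+5 := by omega
        rw [e2]
        exact NML.Rf_even_inj a c'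
    · -- b odd
      have e0 : 2*(2*c'+3)-2 = 4*c'+4 := by omega
      have e1 : 2*(2*c'+3)-1 = 4*c'+5 := by omega
      refine NML.core a (2*c'+3) ha hb (NML.m3 (a*(c'+1)+1) c' 1) ?_
        ((Finset.range (4*c'+4)).image
          (fun j => if j < 3*c'+4 then NML.rho a (4*c'+4) j
            else NML.sig a (2*c'+3) (4*c'+4) (j - (3*c'+4)))) ?_ ?_
        (NML.m3 (a*(c'+1)+1) (c'+1) 1) ?_ ?_ (NML.Rf_odd a c') ?_ ?_ ?_
      · rw [NML.wt_m3, e0]; ring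
      · refine le_trans Finset.card_image_le ?_
        rw [Finset.card_range]; omega
      · intro ν hw hlex
        have hw' := NML.wt_conv hw
        rw [e0] at hw'
        exact NML.classify_T_odd a c' ha ν hw' hlex
      · refine NML.ext3 ?_ ?_ ?_ <;>
          simp [Finsupp.add_apply, Finsupp.single_apply]
      · rw [NML.wt_m3, e1]; ring
      · intro j hj
        rw [e1]
        exact NML.Rf_odd_wt a c' j (by omega)
      · intro j hj
        exact NML.Rf_odd_mem a c' ha j (by omega)
      · have e2 : 2*(2*c'+3)+1 = 4*c'+7 := by omega
        rw [e2]
        exact NML.Rf_odd_inj a c'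
  refine ⟨key, fun hall => key (hall _ ?_)⟩
  intro f hf e
  rw [NML.memI_iff] at hf ⊢
  intro d hd
  refine hf d ?_
  have hne := mem_support_iff.mp hd
  rw [coeff_weightedHomogeneousComponent] at hne
  split_ifs at hne with h
  · exact mem_support_iff.mpr hne
  · exact absurd rfl hne
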